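/- Every matrix M in SL_2(ℤ) can be written as M = T^{a_n} S T^{a_{n-1}} S ··· T^{a_1} S for some n ≥ 1 and positive integers a_1,...,a_n, where T = [[1,1],[0,1]] and S = [[0,-1],[1,0]]. -/

import Mathlib

/-- T = [[1,1],[0,1]] -/
def Tm : Matrix (Fin 2) (Fin 2) ℤ := !![1, 1; 0, 1]

/-- S = [[0,-1],[1,0]] -/
def Sm : Matrix (Fin 2) (Fin 2) ℤ := !![0, -1; 1, 0]

private def fw (a : ℕ) : Matrix (Fin 2) (Fin 2) ℤ := Tm ^ a * Sm

private def prodW (l : List ℕ) : Matrix (Fin 2) (Fin 2) ℤ := ((l.map fw).reverse).prod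

private def Good (M : Matrix (Fin 2) (Fin 2) ℤ) : Prop :=
  ∃ l : List ℕ, l ≠ [] ∧ (∀ x ∈ l, 1 ≤ x) ∧ M = prodW l

private lemma prodW_append (l₁ l₂ : List ℕ) :
    prodW (l₁ ++ l₂) = prodW l₂ * prodW l₁ := by
  simp [prodW, List.prod_append]

private lemma Good.mul {M N : Matrix (Fin 2) (Fin 2) ℤ} (hM : Good M) (hN : Good N) :
    Good (M * N) := by
  obtain ⟨lM, hMne, hMpos, rfl⟩ := hM
  obtain ⟨lN, hNne, hNpos, rfl⟩ := hN
  exact ⟨lN ++ lM, by simp [hNne], by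
    intro x hx; rcases List.mem_append.1 hx with h | h
    · exact hNpos x h
    · exact hMpos x h, (prodW_append lN lM).symm⟩

private lemma neg_one_eq : (-1 : Matrix (Fin 2) (Fin 2) ℤ) = !![-1, 0; 0, -1] := by
  rw [Matrix.eta_fin_two (-1 : Matrix (Fin 2) (Fin 2) ℤ)]
  norm_num [Matrix.one_fin_two]

private lemma fw_one : fw 1 = !![1, -1; 1, 0] := by
  norm_num [fw, Tm, Sm, pow_one, Matrix.mul_fin_two]

private lemma fw_two : fw 2 = !![2, -1; 1, 0] := by
  norm_num [fw, Tm, Sm, pow_two, Matrix.mul_fin_two]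

private lemma prodW_ones : prodW [1,1,1] = -1 := by
  rw [neg_one_eq]
  norm_num [prodW, fw_one, Matrix.mul_fin_two]

private lemma good_one : Good 1 := by
  refine ⟨[1,1,1,1,1,1], by simp, by simp, ?_⟩
  have h : ([1,1,1,1,1,1] : List ℕ) = [1,1,1] ++ [1,1,1] := rfl
  rw [h, prodW_append, prodW_ones]; norm_num

private lemma good_negone : Good (-1) := ⟨[1,1,1], by simp, by simp, prodW_ones.symm⟩

private lemma good_T : Good Tm := by
  refine ⟨[1,1,1,1,1,2], by simp, by simp, ?_⟩
  norm_num [prodW, fw_one, fw_two, Matrix.mul_fin_two, Tm]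

private lemma good_Tinv : Good !![1, -1; 0, 1] := by
  refine ⟨[1,1,1,1,2,1,1], by simp, by simp, ?_⟩
  norm_num [prodW, fw_one, fw_two, Matrix.mul_fin_two]

private lemma good_S : Good Sm := by
  refine ⟨[1,1,1,1,1,2,1,1], by simp, by simp, ?_⟩
  norm_num [prodW, fw_one, fw_two, Matrix.mul_fin_two, Sm]

private lemma good_Tz (b : ℤ) : Good !![1, b; 0, 1] := by
  induction b using Int.induction_on with
  | zero => simpa [Matrix.one_fin_two] using good_one
  | succ k ih =>
      have h : !![1, (k : ℤ) + 1; 0, 1] = Tm * !![1, (k : ℤ); 0, 1] := by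
        norm_num [Tm, Matrix.mul_fin_two]
      rw [h]; exact good_T.mul ih
  | pred k ih =>
      have h : !![1, -(k : ℤ) - 1; 0, 1] = !![1, -1; 0, 1] * !![1, -(k : ℤ); 0, 1] := by
        norm_num [Matrix.mul_fin_two]
        ring_nf
      rw [h]; exact good_Tinv.mul ih

private lemma good_TqS (q : ℤ) : Good !![q, -1; 1, 0] := by
  have h : !![q, -1; 1, 0] = !![1, q; 0, 1] * Sm := by
    norm_num [Sm, Matrix.mul_fin_two]
  rw [h]; exact (good_Tz q).mul good_S

private lemma main : ∀ (n : ℕ) (M : Matrix (Fin 2) (Fin 2) ℤ),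
    (M 1 0).natAbs = n → M.det = 1 → Good M := by
  intro n
  induction n using Nat.strong_induction_on with
  | _ n ih =>
    intro M hc hdet
    obtain ⟨a, b, c, d, rfl⟩ : ∃ a b c d, M = !![a, b; c, d] :=
      ⟨_, _, _, _, Matrix.eta_fin_two M⟩
    have hc : c.natAbs = n := by simpa using hc
    rw [Matrix.det_fin_two_of] at hdet
    rcases eq_or_ne c 0 with h0 | h0
    · -- c = 0 : M is upper triangular, a*d = 1
      subst h0
      rw [mul_zero, sub_zero] at hdet
      rcases Int.mul_eq_one_iff_eq_one_or_neg_one.mp hdet with ⟨ha, hd⟩ | ⟨ha, hd⟩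
      · rw [ha, hd]; exact good_Tz b
      · rw [ha, hd]
        have h : !![(-1 : ℤ), b; 0, -1] = -1 * !![1, -b; 0, 1] := by
          rw [neg_one_eq]
          norm_num [Matrix.mul_fin_two]
        rw [h]; exact good_negone.mul (good_Tz (-b))
    · -- c ≠ 0 : Euclidean step
      set q := a / c with hq
      set r := a % c with hr
      have hdiv : c * q + r = a := Int.mul_ediv_add_emod a c
      have hrlt : r < |c| := by rw [Int.abs_eq_natAbs]; exact Int.emod_lt a h0
      have hrnn : 0 ≤ r := Int.emod_nonneg a h0
      have hfac : !![a, b; c, d] = !![q, -1; 1, 0] * !![c, d; q * c - a, q * d - b] := by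
        norm_num [Matrix.mul_fin_two]
      have hdet' : (!![c, d; q * c - a, q * d - b] : Matrix (Fin 2) (Fin 2) ℤ).det = 1 := by
        rw [Matrix.det_fin_two_of]; nlinarith [hdet]
      have hlt : ((!![c, d; q * c - a, q * d - b] : Matrix (Fin 2) (Fin 2) ℤ) 1 0).natAbs < n := by
        have h1 : (!![c, d; q * c - a, q * d - b] : Matrix (Fin 2) (Fin 2) ℤ) 1 0 = q * c - a := by
          simp
        have h2 : q * c - a = -r := by rw [mul_comm]; omega
        rw [h1, h2, Int.natAbs_neg, ← hc]
        rw [Int.abs_eq_natAbs] at hrlt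
        omega
      rw [hfac]
      exact (good_TqS q).mul (ih _ hlt _ rfl hdet')

theorem exists_TS_factorization (M : Matrix (Fin 2) (Fin 2) ℤ) (hM : M.det = 1) :
    ∃ (n : ℕ) (a : Fin n → ℕ), 1 ≤ n ∧ (∀ i, 1 ≤ a i) ∧
      M = ((List.ofFn fun i => Tm ^ a i * Sm).reverse).prod := by
  obtain ⟨l, hne, hpos, hMeq⟩ := main (M 1 0).natAbs M rfl hM
  refine ⟨l.length, fun i => l.get i, ?_, fun i => hpos _ (l.get_mem i), ?_⟩
  · exact Nat.one_le_iff_ne_zero.mpr (by simpa using hne)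
  · have h : (List.ofFn fun i => Tm ^ l.get i * Sm) = l.map fw := by
      conv_rhs => rw [← List.ofFn_get l, List.map_ofFn]
      rfl
    rw [h]; exact hMeq
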